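/- Three Distance Theorem: for any irrational α ∈ (0,1) and any N ≥ 1, the points {α}, {2α}, ..., {Nα} partition the circle ℝ/ℤ into intervals having at most 3 distinct lengths. -/

import Mathlib

private lemma fract_fract_add (a t : ℝ) :
    Int.fract (Int.fract a + t) = Int.fract (a + t) := by
  have h : Int.fract a + t = (a + t) - (⌊a⌋ : ℤ) := by
    unfold Int.fract; ring
  rw [h, Int.fract_sub_intCast]

private lemma fract_high (x : ℝ) (h1 : 1 ≤ x) (h2 : x < 2) : Int.fract x = x - 1 := by
  have h := Int.fract_sub_intCast x 1
  rw [Int.cast_one] at h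
  rw [← h, Int.fract_eq_self.mpr ⟨by linarith, by linarith⟩]

/-- Three Distance Theorem: for irrational `α ∈ (0,1)` and `N ≥ 1`, the points
`{α}, {2α}, …, {Nα}` on the circle `ℝ/ℤ` determine gaps (arc lengths to the next
point in cyclic order) of at most 3 distinct values. -/
theorem three_distance_theorem (α : ℝ) (hα : Irrational α) (h0 : 0 < α) (h1 : α < 1)
    (N : ℕ) (hN : 1 ≤ N) :
    letI S : Set ℝ := {y | ∃ m : ℕ, 1 ≤ m ∧ m ≤ N ∧ y = Int.fract (m * α)}
    letI gap : ℝ → ℝ := fun s => sInf {t : ℝ | 0 < t ∧ Int.fract (s + t) ∈ S}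
    Set.ncard {g : ℝ | ∃ s ∈ S, g = gap s} ≤ 3 := by
  set S : Set ℝ := {y | ∃ m : ℕ, 1 ≤ m ∧ m ≤ N ∧ y = Int.fract (m * α)} with hSdef
  set gap : ℝ → ℝ := fun s => sInf {t : ℝ | 0 < t ∧ Int.fract (s + t) ∈ S} with hgapdef
  set f : ℤ → ℝ := fun k => Int.fract ((k : ℝ) * α) with hfdef
  have hpos : ∀ k : ℤ, k ≠ 0 → 0 < f k := by
    intro k hk
    rcases (Int.fract_nonneg ((k:ℝ) * α)).lt_or_eq with h | h
    · exact h
    · exfalso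
      have hirr : Irrational ((k:ℝ) * α) := hα.intCast_mul hk
      apply hirr.ne_int ⌊(k:ℝ)*α⌋
      have h' := h.symm
      unfold Int.fract at h'
      linarith
  have hlt1 : ∀ k : ℤ, f k < 1 := fun k => Int.fract_lt_one _
  have hnn : ∀ k : ℤ, 0 ≤ f k := fun k => Int.fract_nonneg _
  have hinj : ∀ j k : ℤ, f j = f k → j = k := by
    intro j k h
    by_contra hne
    obtain ⟨z, hz⟩ := Int.fract_eq_fract.mp h
    have e : ((j - k : ℤ) : ℝ) * α = (z:ℝ) := by push_cast; push_cast at hz; linarith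
    exact (hα.intCast_mul (sub_ne_zero.mpr hne)).ne_int z e
  have hadd : ∀ j k : ℤ, f (j + k) = Int.fract (f j + f k) := by
    intro j k
    show Int.fract (((j + k : ℤ):ℝ) * α)
        = Int.fract (Int.fract ((j:ℝ)*α) + Int.fract ((k:ℝ)*α))
    rw [fract_fract_add ((j:ℝ)*α) (Int.fract ((k:ℝ)*α)),
      add_comm ((j:ℝ)*α) (Int.fract ((k:ℝ)*α)),
      fract_fract_add ((k:ℝ)*α) ((j:ℝ)*α)]
    congr 1; push_cast; ring
  have hneg : ∀ k : ℤ, k ≠ 0 → f (-k) = 1 - f k := by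
    intro k hk
    show Int.fract (((-k : ℤ):ℝ) * α) = 1 - Int.fract ((k:ℝ)*α)
    have e : ((-k : ℤ):ℝ) * α = -((k:ℝ)*α) := by push_cast; ring
    rw [e, Int.fract_neg (ne_of_gt (hpos k hk))]
  -- extreme points
  set A : Finset ℤ := Finset.Icc 1 (N:ℤ) with hAdef
  have hAne : A.Nonempty := ⟨1, Finset.mem_Icc.mpr ⟨le_refl _, by exact_mod_cast hN⟩⟩
  obtain ⟨u, hu, hu2⟩ := A.exists_min_image f hAne
  obtain ⟨v, hv, hv2⟩ := A.exists_max_image f hAne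
  obtain ⟨hu1, huN⟩ := Finset.mem_Icc.mp hu
  obtain ⟨hv1, hvN⟩ := Finset.mem_Icc.mp hv
  -- u + v ≥ N + 1
  have hNuv : (N:ℤ) + 1 ≤ u + v := by
    by_contra hcon
    push_neg at hcon
    have huvA : u + v ∈ A := Finset.mem_Icc.mpr ⟨by omega, by omega⟩
    rcases lt_or_ge (f u + f v) 1 with hc | hc
    · have e : f (u + v) = f u + f v := by
        rw [hadd, Int.fract_eq_self.mpr ⟨by linarith [hnn u, hnn v], hc⟩]
      have := hv2 _ huvA
      linarith [hpos u (by omega)]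
    · have e : f (u + v) = f u + f v - 1 := by
        rw [hadd, fract_high _ hc (by linarith [hlt1 u, hlt1 v])]
      have := hu2 _ huvA
      linarith [hlt1 v]
  -- main inclusion
  have hsub : {g : ℝ | ∃ s ∈ S, g = gap s}
      ⊆ ({f u, 1 - f v, f u + (1 - f v)} : Set ℝ) := by
    rintro g ⟨s, hs, rfl⟩
    have hs' : ∃ m : ℕ, 1 ≤ m ∧ m ≤ N ∧ s = Int.fract ((m:ℝ) * α) := hs
    obtain ⟨m, hm1, hmN, rfl⟩ := hs'
    -- the key sInf characterization
    have key : ∀ g : ℝ, 0 < g → Int.fract (Int.fract ((m:ℝ)*α) + g) ∈ S →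
        (∀ t : ℝ, 0 < t → Int.fract (Int.fract ((m:ℝ)*α) + t) ∈ S → g ≤ t) →
        gap (Int.fract ((m:ℝ)*α)) = g := by
      intro g hg0 hgS hlb
      rw [hgapdef]
      show sInf {t : ℝ | 0 < t ∧ Int.fract (Int.fract ((m:ℝ)*α) + t) ∈ S} = g
      have hmemT : g ∈ {t : ℝ | 0 < t ∧ Int.fract (Int.fract ((m:ℝ)*α) + t) ∈ S} :=
        ⟨hg0, hgS⟩
      have hlb' : ∀ t ∈ {t : ℝ | 0 < t ∧ Int.fract (Int.fract ((m:ℝ)*α) + t) ∈ S},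
          g ≤ t := fun t ht => hlb t ht.1 ht.2
      exact le_antisymm (csInf_le ⟨g, hlb'⟩ hmemT) (le_csInf ⟨g, hmemT⟩ hlb')
    -- membership helper
    have hmemS : ∀ k : ℤ, 1 - (m:ℤ) ≤ k → k ≤ (N:ℤ) - m → k ≠ 0 →
        Int.fract (Int.fract ((m:ℝ)*α) + f k) ∈ S := by
      intro k hk1 hk2 hk0
      have e1 : Int.fract (Int.fract ((m:ℝ)*α) + f k)
          = Int.fract ((((m:ℤ) + k).toNat : ℝ) * α) := by
        show Int.fract (Int.fract ((m:ℝ)*α) + Int.fract ((k:ℝ)*α)) = _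
        rw [fract_fract_add ((m:ℝ)*α) (Int.fract ((k:ℝ)*α)),
          add_comm ((m:ℝ)*α) (Int.fract ((k:ℝ)*α)),
          fract_fract_add ((k:ℝ)*α) ((m:ℝ)*α)]
        congr 1
        have : ((((m:ℤ) + k).toNat : ℤ) : ℝ) = (m:ℝ) + (k:ℝ) := by
          rw [Int.toNat_of_nonneg (by omega)]; push_cast; ring
        push_cast at this ⊢
        rw [this]; ring
      exact ⟨((m:ℤ) + k).toNat, by omega, by omega, e1⟩
    have hmem1 : Int.fract (Int.fract ((m:ℝ)*α) + 1) ∈ S := by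
      have e : Int.fract (Int.fract ((m:ℝ)*α) + 1) = Int.fract ((m:ℝ)*α) := by
        rw [fract_fract_add]
        have h' := Int.fract_add_intCast ((m:ℝ)*α) 1
        rw [Int.cast_one] at h'
        exact h'
      exact ⟨m, hm1, hmN, e⟩
    -- structure of elements of T
    have hT : ∀ t : ℝ, 0 < t → Int.fract (Int.fract ((m:ℝ)*α) + t) ∈ S →
        ∃ k : ℤ, 1 - (m:ℤ) ≤ k ∧ k ≤ (N:ℤ) - m ∧
          ((k = 0 ∧ 1 ≤ t) ∨ (k ≠ 0 ∧ f k ≤ t)) := by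
      intro t ht hts
      have hts' : ∃ n : ℕ, 1 ≤ n ∧ n ≤ N ∧
          Int.fract (Int.fract ((m:ℝ)*α) + t) = Int.fract ((n:ℝ) * α) := hts
      obtain ⟨n, hn1, hnN, he⟩ := hts'
      rw [fract_fract_add ((m:ℝ)*α) t] at he
      obtain ⟨z, hz⟩ := Int.fract_eq_fract.mp he
      refine ⟨(n:ℤ) - m, by omega, by omega, ?_⟩
      by_cases hk : (n:ℤ) - m = 0
      · left
        refine ⟨hk, ?_⟩
        have hnm : ((n:ℝ)) = ((m:ℝ)) := by
          have : n = m := by omega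
          rw [this]
        rw [hnm] at hz
        have htz : t = (z:ℝ) := by linarith
        have hz0 : (0:ℤ) < z := by
          have : (0:ℝ) < (z:ℝ) := by linarith
          exact_mod_cast this
        have : (1:ℝ) ≤ (z:ℝ) := by exact_mod_cast hz0
        linarith
      · right
        refine ⟨hk, ?_⟩
        set k : ℤ := (n:ℤ) - m with hkdef
        have ht2 : t = (k:ℝ)*α + z := by
          have : (k:ℝ) = (n:ℝ) - (m:ℝ) := by rw [hkdef]; push_cast; ring
          rw [this]; linarith
        have hw : t - f k = ((z + ⌊(k:ℝ)*α⌋ : ℤ) : ℝ) := by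
          show t - Int.fract ((k:ℝ)*α) = _
          unfold Int.fract
          push_cast
          linarith
        have hwnn : (0:ℤ) ≤ z + ⌊(k:ℝ)*α⌋ := by
          by_contra hcon
          push_neg at hcon
          have h' : z + ⌊(k:ℝ)*α⌋ ≤ -1 := by omega
          have h'' : ((z + ⌊(k:ℝ)*α⌋ : ℤ) : ℝ) ≤ -1 := by exact_mod_cast h'
          linarith [hlt1 k]
        have : (0:ℝ) ≤ ((z + ⌊(k:ℝ)*α⌋ : ℤ) : ℝ) := by exact_mod_cast hwnn
        linarith
    -- case analysis
    rcases le_or_gt ((m:ℤ) + u) (N:ℤ) with hA1 | hA1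
    · -- gap = f u
      have hbound : ∀ k : ℤ, 1 - (m:ℤ) ≤ k → k ≤ (N:ℤ) - m → k ≠ 0 → f u ≤ f k := by
        intro k hk1 hk2 hk0
        rcases lt_or_ge 0 k with hkp | hkn
        · exact hu2 k (Finset.mem_Icc.mpr ⟨by omega, by omega⟩)
        · by_contra hcon
          push_neg at hcon
          have hjA : -k + u ∈ A := Finset.mem_Icc.mpr ⟨by omega, by omega⟩
          have hfj : f (-k) = 1 - f k := by
            have h' := hneg (-k) (by omega)
            rw [neg_neg] at h'
            linarith
          have e : f (-k + u) = f (-k) + f u - 1 := by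
            rw [hadd, fract_high _ (by rw [hfj]; linarith)
              (by linarith [hlt1 (-k), hlt1 u])]
          have := hu2 _ hjA
          rw [e, hfj] at this
          linarith [hpos k hk0]
      have hgap : gap (Int.fract ((m:ℝ)*α)) = f u := by
        apply key
        · exact hpos u (by omega)
        · exact hmemS u (by omega) (by omega) (by omega)
        · intro t ht hts
          obtain ⟨k, hk1, hk2, hcase⟩ := hT t ht hts
          rcases hcase with ⟨hk0, h1t⟩ | ⟨hk0, hft⟩
          · linarith [hlt1 u]
          · linarith [hbound k hk1 hk2 hk0]
      rw [hgap]
      exact Set.mem_insert _ _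
    rcases le_or_gt v ((m:ℤ) - 1) with hB1 | hB1
    · -- gap = 1 - f v
      have hbound : ∀ k : ℤ, 1 - (m:ℤ) ≤ k → k ≤ (N:ℤ) - m → k ≠ 0 →
          1 - f v ≤ f k := by
        intro k hk1 hk2 hk0
        rcases lt_or_ge 0 k with hkp | hkn
        · by_contra hcon
          push_neg at hcon
          have hkvA : k + v ∈ A := Finset.mem_Icc.mpr ⟨by omega, by omega⟩
          have e : f (k + v) = f k + f v := by
            rw [hadd, Int.fract_eq_self.mpr ⟨by linarith [hnn k, hnn v], by linarith⟩]
          have := hv2 _ hkvA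
          rw [e] at this
          linarith [hpos k (by omega)]
        · have hjA : -k ∈ A := Finset.mem_Icc.mpr ⟨by omega, by omega⟩
          have hfj : f k = 1 - f (-k) := by
            have h' := hneg (-k) (by omega)
            rw [neg_neg] at h'
            linarith
          rw [hfj]
          linarith [hv2 _ hjA]
      have hgap : gap (Int.fract ((m:ℝ)*α)) = 1 - f v := by
        apply key
        · linarith [hlt1 v]
        · have h' := hmemS (-v) (by omega) (by omega) (by omega)
          rw [hneg v (by omega)] at h'
          exact h'
        · intro t ht hts
          obtain ⟨k, hk1, hk2, hcase⟩ := hT t ht hts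
          rcases hcase with ⟨hk0, h1t⟩ | ⟨hk0, hft⟩
          · linarith [hnn v]
          · linarith [hbound k hk1 hk2 hk0]
      rw [hgap]
      exact Set.mem_insert_of_mem _ (Set.mem_insert _ _)
    · -- gap = f u + (1 - f v)
      by_cases huv : u = v
      · -- then N = 1
        have hN1 : N = 1 := by
          by_contra hNne
          have h1A : (1:ℤ) ∈ A := Finset.mem_Icc.mpr ⟨le_refl _, by omega⟩
          have h2A : (2:ℤ) ∈ A := Finset.mem_Icc.mpr ⟨by omega, by omega⟩
          have e1 : f 1 = f u := le_antisymm (by rw [huv]; exact hv2 _ h1A) (hu2 _ h1A)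
          have e2 : f 2 = f u := le_antisymm (by rw [huv]; exact hv2 _ h2A) (hu2 _ h2A)
          have : (1:ℤ) = 2 := hinj _ _ (e1.trans e2.symm)
          omega
        have hlm : f u + (1 - f v) = 1 := by rw [huv]; ring
        have hgap : gap (Int.fract ((m:ℝ)*α)) = 1 := by
          apply key
          · exact one_pos
          · exact hmem1
          · intro t ht hts
            obtain ⟨k, hk1, hk2, hcase⟩ := hT t ht hts
            rcases hcase with ⟨hk0, h1t⟩ | ⟨hk0, hft⟩
            · exact h1t
            · exfalso; omega
        refine Set.mem_insert_of_mem _ (Set.mem_insert_of_mem _ ?_)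
        rw [hgap, hlm]
        rfl
      · have hfufv : f u < f v :=
          lt_of_le_of_ne (hv2 u hu) (fun h => huv (hinj u v h))
        have hbound : ∀ k : ℤ, 1 - (m:ℤ) ≤ k → k ≤ (N:ℤ) - m → k ≠ 0 →
            f u + (1 - f v) ≤ f k := by
          intro k hk1 hk2 hk0
          rcases lt_or_ge 0 k with hkp | hkn
          · have hkA : k ∈ A := Finset.mem_Icc.mpr ⟨by omega, by omega⟩
            have hku : k ≠ u := by omega
            have hlamk : f u < f k :=
              lt_of_le_of_ne (hu2 k hkA) (fun h => hku (hinj k u h.symm))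
            have e2 : f (k - u) = f k - f u := by
              have h' : k - u = k + (-u) := by ring
              rw [h', hadd, hneg u (by omega),
                fract_high _ (by linarith) (by linarith [hlt1 k, hnn u])]
              ring
            have e3 : f (k - u) = 1 - f (u - k) := by
              have h' : k - u = -(u - k) := by ring
              rw [h', hneg (u - k) (by omega)]
            have hukA : u - k ∈ A := Finset.mem_Icc.mpr ⟨by omega, by omega⟩
            have := hv2 _ hukA
            linarith [e2.symm.trans e3]
          · have hjA : -k ∈ A := Finset.mem_Icc.mpr ⟨by omega, by omega⟩
            have hjv : -k ≠ v := by omega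
            have hjlt : f (-k) < f v :=
              lt_of_le_of_ne (hv2 _ hjA) (fun h => hjv (hinj _ _ h))
            have hfk : f k = 1 - f (-k) := by
              have h' := hneg (-k) (by omega)
              rw [neg_neg] at h'
              linarith
            have hvkA : v + k ∈ A := Finset.mem_Icc.mpr ⟨by omega, by omega⟩
            have e2 : f (v + k) = f v + f k - 1 := by
              rw [hadd, fract_high _ (by rw [hfk]; linarith)
                (by linarith [hlt1 v, hlt1 k])]
            have := hu2 _ hvkA
            rw [e2] at this
            linarith
        have hfu0 : 0 < f u := hpos u (by omega)
        have hfv1 : f v < 1 := hlt1 v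
        have hgap : gap (Int.fract ((m:ℝ)*α)) = f u + (1 - f v) := by
          apply key
          · linarith
          · have e : f (u - v) = f u + (1 - f v) := by
              have h' : u - v = u + (-v) := by ring
              rw [h', hadd, hneg v (by omega),
                Int.fract_eq_self.mpr ⟨by linarith [hpos u (by omega)], by linarith⟩]
            have h' := hmemS (u - v) (by omega) (by omega) (by omega)
            rw [e] at h'
            exact h'
          · intro t ht hts
            obtain ⟨k, hk1, hk2, hcase⟩ := hT t ht hts
            rcases hcase with ⟨hk0, h1t⟩ | ⟨hk0, hft⟩
            · linarith [hpos u (by omega), hlt1 v, hnn v, hlt1 u]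
            · linarith [hbound k hk1 hk2 hk0]
        rw [hgap]
        exact Set.mem_insert_of_mem _ (Set.mem_insert_of_mem _ rfl)
  have hfin : ({f u, 1 - f v, f u + (1 - f v)} : Set ℝ).Finite :=
    (Set.finite_singleton _).insert _ |>.insert _
  have hle := Set.ncard_le_ncard hsub hfin
  refine hle.trans ?_
  calc ({f u, 1 - f v, f u + (1 - f v)} : Set ℝ).ncard
      ≤ ({1 - f v, f u + (1 - f v)} : Set ℝ).ncard + 1 := Set.ncard_insert_le _ _
    _ ≤ (({f u + (1 - f v)} : Set ℝ).ncard + 1) + 1 := by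
        have := Set.ncard_insert_le (1 - f v) ({f u + (1 - f v)} : Set ℝ)
        omega
    _ ≤ 3 := by rw [Set.ncard_singleton]
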